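/- Let K be a field of characteristic zero, L a field extension of K, V a finite-dimensional L-vector space, G a group, and ρ : G → GL(V) a group representation such that for every g ∈ G the automorphism ρ(g) is semisimple and tr(ρ(g)) lies in K. Let u = ρ(g₀) for some g₀ ∈ G, let P ∈ K[X] satisfy P(u) = 0 (evaluating via K[X] → L[X]), and write P = P₁·P₂ with P₁, P₂ coprime in K[X]. If the subspaces Δ₁ = ker P₁(u) and Δ₂ = ker P₂(u) are both stable under ρ(g) for every g ∈ G, then V is the internal direct sum V = Δ₁ ⊕ Δ₂, and for i = 1, 2 and every g ∈ G the trace of the restriction of ρ(g) to Δᵢ lies in K. -/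

import Mathlib

open Polynomial

/-- Auxiliary lemma: the trace statement for one factor. -/
theorem aux_trace_mem
    (K L : Type*) [Field K] [Field L] [Algebra K L]
    (V : Type*) [AddCommGroup V] [Module L V] [FiniteDimensional L V]
    (G : Type*) [Group G] (ρ : G →* (Module.End L V)ˣ)
    (htr : ∀ g : G, LinearMap.trace L V (ρ g : Module.End L V) ∈ Set.range (algebraMap K L))
    (g₀ : G) (P P₁ P₂ : K[X])
    (hPu : aeval (ρ g₀ : Module.End L V) (P.map (algebraMap K L)) = 0)
    (hP : P = P₁ * P₂) (hcop : IsCoprime P₁ P₂)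
    (Δ₁ : Submodule L V)
    (hΔ₁ : Δ₁ = LinearMap.ker (aeval (ρ g₀ : Module.End L V) (P₁.map (algebraMap K L))))
    (hstab₁ : ∀ g : G, ∀ x ∈ Δ₁, (ρ g : Module.End L V) x ∈ Δ₁)
    (g : G) :
    LinearMap.trace L Δ₁ ((ρ g : Module.End L V).restrict (hstab₁ g))
      ∈ Set.range (algebraMap K L) := by
  obtain ⟨A, B, hAB⟩ := hcop
  set u : Module.End L V := (ρ g₀ : Module.End L V) with hu
  set f : Module.End L V := (ρ g : Module.End L V) with hf
  set Q : L[X] := (B * P₂).map (algebraMap K L) with hQ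
  set π : Module.End L V := aeval u Q with hπ
  -- π maps into Δ₁
  have hrange : ∀ x : V, π x ∈ Δ₁ := by
    intro x
    rw [hΔ₁, LinearMap.mem_ker]
    have h1 : P₁ * (B * P₂) = B * P := by rw [hP]; ring
    have : aeval u ((P₁ * (B * P₂)).map (algebraMap K L)) x = 0 := by
      rw [h1, Polynomial.map_mul, map_mul, Module.End.mul_apply, hPu, LinearMap.zero_apply,
        map_zero]
    rwa [Polynomial.map_mul, map_mul, Module.End.mul_apply] at this
  -- π is the identity on Δ₁
  have hid : ∀ x ∈ Δ₁, π x = x := by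
    intro x hx
    rw [hΔ₁, LinearMap.mem_ker] at hx
    have h1 : aeval u (((A * P₁ + B * P₂)).map (algebraMap K L)) x = x := by
      rw [hAB, Polynomial.map_one, map_one, Module.End.one_apply]
    rw [Polynomial.map_add, map_add, LinearMap.add_apply, Polynomial.map_mul, map_mul,
      Module.End.mul_apply, hx, map_zero, zero_add] at h1
    exact h1
  set h : Module.End L V := π * f with hh
  have hmem : ∀ x : V, h x ∈ Δ₁ := fun x => hrange (f x)
  have hres : (f.restrict (hstab₁ g)) = h.restrict (fun x _ => hmem x) := by
    ext x
    simp only [LinearMap.restrict_coe_apply, hh, Module.End.mul_apply]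
    exact (hid (f x) (hstab₁ g x x.2)).symm
  rw [hres, LinearMap.trace_restrict_eq_of_forall_mem Δ₁ h hmem]
  -- expand h as a sum of ρ of group elements
  have hexp : h = ∑ i ∈ Finset.range (Q.natDegree + 1),
      Q.coeff i • ((ρ (g₀ ^ i * g) : Module.End L V)) := by
    rw [hh, hπ, aeval_eq_sum_range, Finset.sum_mul]
    refine Finset.sum_congr rfl fun i _ => ?_
    rw [smul_mul_assoc]
    congr 1
    rw [map_mul, map_pow]
    rfl
  rw [hexp, map_sum]
  have hbot : Set.range (algebraMap K L) = ((⊥ : Subalgebra K L) : Set L) := by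
    ext x; simp [Algebra.mem_bot]
  rw [hbot] at htr ⊢
  refine Subalgebra.sum_mem _ fun i _ => ?_
  rw [LinearMap.map_smul, smul_eq_mul]
  refine Subalgebra.mul_mem _ ?_ (htr _)
  rw [hQ, coeff_map]
  exact ⟨(B * P₂).coeff i, rfl⟩

/-- Corollary 4.2 of the paper: for a semisimple representation defined over `K`, if
`P = P₁ P₂` with `P₁, P₂` coprime in `K[X]` annihilates `u = ρ g₀`, and the kernels
`Δᵢ = ker Pᵢ(u)` are stable under the representation, then `V = Δ₁ ⊕ Δ₂` and each `Δᵢ`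
is defined over `K` (the traces of the restricted representation lie in `K`). -/
theorem subrepresentation_defined_over_base
    (K L : Type*) [Field K] [CharZero K] [Field L] [Algebra K L]
    (V : Type*) [AddCommGroup V] [Module L V] [FiniteDimensional L V]
    (G : Type*) [Group G] (ρ : G →* (Module.End L V)ˣ)
    (hss : ∀ g : G, (ρ g : Module.End L V).IsSemisimple)
    (htr : ∀ g : G, LinearMap.trace L V (ρ g : Module.End L V) ∈ Set.range (algebraMap K L))
    (g₀ : G) (P P₁ P₂ : K[X])
    (hPu : aeval (ρ g₀ : Module.End L V) (P.map (algebraMap K L)) = 0)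
    (hP : P = P₁ * P₂) (hcop : IsCoprime P₁ P₂)
    (Δ₁ Δ₂ : Submodule L V)
    (hΔ₁ : Δ₁ = LinearMap.ker (aeval (ρ g₀ : Module.End L V) (P₁.map (algebraMap K L))))
    (hΔ₂ : Δ₂ = LinearMap.ker (aeval (ρ g₀ : Module.End L V) (P₂.map (algebraMap K L))))
    (hstab₁ : ∀ g : G, ∀ x ∈ Δ₁, (ρ g : Module.End L V) x ∈ Δ₁)
    (hstab₂ : ∀ g : G, ∀ x ∈ Δ₂, (ρ g : Module.End L V) x ∈ Δ₂) :
    IsCompl Δ₁ Δ₂ ∧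
    (∀ g : G, LinearMap.trace L Δ₁ ((ρ g : Module.End L V).restrict (hstab₁ g))
      ∈ Set.range (algebraMap K L)) ∧
    (∀ g : G, LinearMap.trace L Δ₂ ((ρ g : Module.End L V).restrict (hstab₂ g))
      ∈ Set.range (algebraMap K L)) := by
  have hcopL : IsCoprime (P₁.map (algebraMap K L)) (P₂.map (algebraMap K L)) :=
    hcop.map (mapRingHom (algebraMap K L))
  set u : Module.End L V := (ρ g₀ : Module.End L V)
  refine ⟨⟨?_, ?_⟩, ?_, ?_⟩
  · rw [hΔ₁, hΔ₂]
    exact Polynomial.disjoint_ker_aeval_of_isCoprime u hcopL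
  · rw [codisjoint_iff, hΔ₁, hΔ₂,
      Polynomial.sup_ker_aeval_eq_ker_aeval_mul_of_coprime u hcopL,
      ← Polynomial.map_mul, ← hP, hPu]
    exact LinearMap.ker_zero
  · exact fun g => aux_trace_mem K L V G ρ htr g₀ P P₁ P₂ hPu hP hcop Δ₁ hΔ₁ hstab₁ g
  · exact fun g => aux_trace_mem K L V G ρ htr g₀ P P₂ P₁ hPu (by rw [hP, mul_comm])
      hcop.symm Δ₂ hΔ₂ hstab₂ g
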